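/- Let B be an n×n integer matrix with det(B − I) ≠ 0 and let v ∈ ℝ^n. Then the affine map f: T^n → T^n defined by f(π(x)) = π(Bx + v) is well defined, its set of fixed points is nonempty and finite, and it has exactly |det(B − I)| fixed points. -/

import Mathlib

/-- The integer lattice `ℤ^n ⊂ ℝ^n`, as an additive subgroup. -/
noncomputable def intLattice (n : ℕ) : AddSubgroup (Fin n → ℝ) :=
  (Submodule.span ℤ (Set.range fun i : Fin n => (Pi.single i 1 : Fin n → ℝ))).toAddSubgroup

/-- The torus `T^n = ℝ^n / ℤ^n`. -/
abbrev Torus (n : ℕ) := (Fin n → ℝ) ⧸ intLattice n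

/-- The quotient homomorphism `π : ℝ^n → T^n`. -/
noncomputable def torusPi (n : ℕ) : (Fin n → ℝ) →+ Torus n :=
  QuotientAddGroup.mk' (intLattice n)

/-- Coordinatewise integer cast, as a `ℤ`-linear map. -/
noncomputable def castHomL (n : ℕ) : (Fin n → ℤ) →ₗ[ℤ] (Fin n → ℝ) where
  toFun m := fun i => (m i : ℝ)
  map_add' x y := by
    funext i
    show ((x i + y i : ℤ) : ℝ) = (x i : ℝ) + (y i : ℝ)
    push_cast; ring
  map_smul' c x := by
    funext i
    show ((c * x i : ℤ) : ℝ) = c • ((x i : ℝ))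
    push_cast
    simp [zsmul_eq_mul]

lemma castHomL_injective (n : ℕ) : Function.Injective (castHomL n) := by
  intro x y h
  funext i
  have h2 : ((x i : ℝ)) = ((y i : ℝ)) := congrFun h i
  exact_mod_cast h2

lemma mem_intLattice {n : ℕ} {x : Fin n → ℝ} :
    x ∈ intLattice n ↔ ∃ m : Fin n → ℤ, castHomL n m = x := by
  have hsp : Submodule.span ℤ (Set.range fun i : Fin n => (Pi.single i 1 : Fin n → ℝ))
      = LinearMap.range (castHomL n) := by
    have hfun : ⇑(castHomL n) ∘ ⇑(Pi.basisFun ℤ (Fin n))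
        = fun i : Fin n => (Pi.single i 1 : Fin n → ℝ) := by
      funext i
      show castHomL n (Pi.basisFun ℤ (Fin n) i) = Pi.single i (1:ℝ)
      rw [Pi.basisFun_apply]
      funext j
      simp only [castHomL, LinearMap.coe_mk, AddHom.coe_mk]
      by_cases h : j = i
      · subst h
        rw [Pi.single_eq_same, Pi.single_eq_same]
        exact Int.cast_one
      · rw [Pi.single_eq_of_ne h, Pi.single_eq_of_ne h]
        exact Int.cast_zero
    rw [← Submodule.map_top, ← (Pi.basisFun ℤ (Fin n)).span_eq, Submodule.map_span,
      ← Set.range_comp, hfun]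
  constructor
  · intro hx
    have : x ∈ LinearMap.range (castHomL n) := by
      rw [← hsp]; exact hx
    exact this
  · intro ⟨m, hm⟩
    show x ∈ Submodule.span ℤ _
    rw [hsp]; exact ⟨m, hm⟩

/-- The cokernel of an integer matrix with nonzero determinant has cardinality
`|det|`. -/
lemma index_range_mulVecLin {n : ℕ} (A : Matrix (Fin n) (Fin n) ℤ) (hA : A.det ≠ 0) :
    (LinearMap.range A.mulVecLin).toAddSubgroup.index = A.det.natAbs := by
  classical
  -- injectivity of `A.mulVecLin`
  have hD : ((A.map (Int.cast : ℤ → ℝ)).det) ≠ 0 := by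
    rw [show (A.map (Int.cast : ℤ → ℝ)) = (Int.castRingHom ℝ).mapMatrix A from rfl,
      ← RingHom.map_det]
    simpa using hA
  have hDu : IsUnit (A.map (Int.cast : ℤ → ℝ)).det := isUnit_iff_ne_zero.mpr hD
  have hcast : ∀ m : Fin n → ℤ,
      (A.map (Int.cast : ℤ → ℝ)).mulVec (castHomL n m) = castHomL n (A.mulVec m) := by
    intro m
    funext i
    simp only [Matrix.mulVec, dotProduct, Matrix.map_apply, castHomL,
      LinearMap.coe_mk, AddHom.coe_mk]
    push_cast
    rfl
  have hinj : Function.Injective A.mulVecLin := by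
    rw [← LinearMap.ker_eq_bot]
    rw [LinearMap.ker_eq_bot']
    intro m hm
    have h0 : castHomL n (A.mulVec m) = 0 := by
      rw [show A.mulVecLin m = A.mulVec m from rfl] at hm
      rw [hm]; funext i; simp [castHomL]
    rw [← hcast] at h0
    have : castHomL n m = 0 := by
      have := congrArg (fun w => (A.map (Int.cast : ℤ → ℝ))⁻¹.mulVec w) h0
      simpa [Matrix.mulVec_mulVec, Matrix.nonsing_inv_mul _ hDu, Matrix.one_mulVec,
        Matrix.mulVec_zero] using this
    apply castHomL_injective n
    rw [this]; funext i; simp [castHomL]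
  set N : Submodule ℤ (Fin n → ℤ) := LinearMap.range A.mulVecLin with hN
  obtain ⟨m, snf⟩ := N.smithNormalForm (Pi.basisFun ℤ (Fin n))
  have hidx : N.toAddSubgroup.index ≠ 0 := by
    apply Int.submodule_toAddSubgroup_index_ne_zero_iff.mpr
    exact ⟨(LinearEquiv.ofInjective A.mulVecLin hinj).symm⟩
  have hm : m = n := by
    have := snf.toAddSubgroup_index_ne_zero_iff.mp hidx
    simpa using this
  subst hm
  -- the index is the product of |a i|
  have hindex : N.toAddSubgroup.index = ∏ i : Fin m, (snf.a i).natAbs := by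
    rw [snf.toAddSubgroup_index_eq_ite]
    simp [Ideal.span_singleton_toAddSubgroup_eq_zmultiples, Int.index_zmultiples]
  rw [hindex]
  -- relate to the determinant
  have hcard : Function.Bijective snf.f := Finite.injective_iff_bijective.mp snf.f.injective
  set e : Fin m ≃ Fin m := Equiv.ofBijective snf.f hcard with he
  set F : (Fin m → ℤ) →ₗ[ℤ] (Fin m → ℤ) :=
    N.subtype ∘ₗ (snf.bM.equiv snf.bN e.symm : (Fin m → ℤ) ≃ₗ[ℤ] N).toLinearMap with hF
  have hFapp : ∀ j, F (snf.bM j) = snf.a (e.symm j) • snf.bM j := by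
    intro j
    have h1 : F (snf.bM j) = (snf.bN (e.symm j) : Fin m → ℤ) := by
      simp [hF, Module.Basis.equiv_apply]
    rw [h1, snf.snf]
    have h2 : snf.f (e.symm j) = j := e.apply_symm_apply j
    rw [h2]
  have hmat : LinearMap.toMatrix snf.bM snf.bM F = Matrix.diagonal (fun j => snf.a (e.symm j)) := by
    ext i j
    rw [LinearMap.toMatrix_apply, hFapp, map_smul, Module.Basis.repr_self, Finsupp.smul_single,
      smul_eq_mul, mul_one]
    by_cases h : i = j
    · rw [h, Matrix.diagonal_apply_eq, Finsupp.single_eq_same]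
    · rw [Matrix.diagonal_apply_ne _ h, Finsupp.single_eq_of_ne h]
  have hdetF : LinearMap.det F = ∏ i : Fin m, snf.a i := by
    rw [← LinearMap.det_toMatrix snf.bM, hmat, Matrix.det_diagonal]
    exact Equiv.prod_comp e.symm snf.a
  -- `A.mulVecLin` and `F` are both `N.subtype` composed with an equiv
  have hAeq : A.mulVecLin = N.subtype ∘ₗ
      (LinearEquiv.ofInjective A.mulVecLin hinj : (Fin m → ℤ) ≃ₗ[ℤ] N).toLinearMap := by
    ext x
    rfl
  have hassoc : Associated (LinearMap.det A.mulVecLin) (LinearMap.det F) := by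
    rw [hAeq, hF]
    exact LinearMap.associated_det_comp_equiv _ _ _
  have hnab : (LinearMap.det A.mulVecLin).natAbs = (LinearMap.det F).natAbs :=
    Int.natAbs_eq_iff_associated.mpr hassoc
  rw [show A.mulVecLin = Matrix.toLin' A from (Matrix.toLin'_apply' A).symm,
    LinearMap.det_toLin'] at hnab
  rw [hnab, hdetF]
  exact (map_prod Int.natAbsHom snf.a Finset.univ).symm

/-- If `B` is an `n×n` integer matrix with `det(B − I) ≠ 0` and `v ∈ ℝ^n`, then the
affine map `f(π(x)) = π(Bx + v)` of `T^n` is well defined, its fixed-point set is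
nonempty and finite, and it has exactly `|det(B − I)|` fixed points. -/
theorem stmt11 {n : ℕ} (B : Matrix (Fin n) (Fin n) ℤ)
    (hB : (B - 1).det ≠ 0) (v : Fin n → ℝ) :
    ∃ f : Torus n → Torus n,
      (∀ x : Fin n → ℝ,
        f (torusPi n x) = torusPi n ((B.map (Int.cast : ℤ → ℝ)).mulVec x + v)) ∧
      {p : Torus n | f p = p}.Finite ∧
      {p : Torus n | f p = p}.Nonempty ∧
      {p : Torus n | f p = p}.ncard = (B - 1).det.natAbs := by
  classical
  set A : Matrix (Fin n) (Fin n) ℤ := B - 1 with hA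
  set C : Matrix (Fin n) (Fin n) ℝ := B.map (Int.cast : ℤ → ℝ) with hC
  set D : Matrix (Fin n) (Fin n) ℝ := A.map (Int.cast : ℤ → ℝ) with hD
  have hDC : D = C - 1 := by
    rw [hD, hA, hC]
    ext i j
    simp only [Matrix.map_apply, Matrix.sub_apply, Matrix.one_apply]
    by_cases h : i = j <;> simp [h]
  have hDdet : D.det ≠ 0 := by
    rw [hD, show (A.map (Int.cast : ℤ → ℝ)) = (Int.castRingHom ℝ).mapMatrix A from rfl,
      ← RingHom.map_det]
    simpa using hB
  have hDu : IsUnit D.det := isUnit_iff_ne_zero.mpr hDdet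
  have hDinj : Function.Injective D.mulVec := by
    intro x y h
    have := congrArg (fun w => D⁻¹.mulVec w) h
    simpa [Matrix.mulVec_mulVec, Matrix.nonsing_inv_mul _ hDu, Matrix.one_mulVec] using this
  have hDDinv : ∀ w : Fin n → ℝ, D.mulVec (D⁻¹.mulVec w) = w := by
    intro w
    rw [Matrix.mulVec_mulVec, Matrix.mul_nonsing_inv _ hDu, Matrix.one_mulVec]
  have hcastD : ∀ m : Fin n → ℤ, D.mulVec (castHomL n m) = castHomL n (A.mulVec m) := by
    intro m
    funext i
    simp only [hD, Matrix.mulVec, dotProduct, Matrix.map_apply, castHomL,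
      LinearMap.coe_mk, AddHom.coe_mk]
    push_cast
    rfl
  have hcastC : ∀ m : Fin n → ℤ, C.mulVec (castHomL n m) = castHomL n (B.mulVec m) := by
    intro m
    funext i
    simp only [hC, Matrix.mulVec, dotProduct, Matrix.map_apply, castHomL,
      LinearMap.coe_mk, AddHom.coe_mk]
    push_cast
    rfl
  -- the map `f`
  have hle : intLattice n ≤ (intLattice n).comap C.mulVecLin.toAddMonoidHom := by
    intro x hx
    obtain ⟨m, rfl⟩ := mem_intLattice.mp hx
    simp only [AddSubgroup.mem_comap]
    show C.mulVec (castHomL n m) ∈ intLattice n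
    rw [hcastC]
    exact mem_intLattice.mpr ⟨B.mulVec m, rfl⟩
  set g : Torus n → Torus n :=
    ⇑(QuotientAddGroup.map (intLattice n) (intLattice n) C.mulVecLin.toAddMonoidHom hle)
    with hg
  set f : Torus n → Torus n := fun p => g p + torusPi n v with hf
  have hfapp : ∀ x : Fin n → ℝ, f (torusPi n x) = torusPi n (C.mulVec x + v) := by
    intro x
    show g (torusPi n x) + torusPi n v = torusPi n (C.mulVec x + v)
    rw [map_add]
    congr 1
  -- characterization of fixed points
  have hsub : ∀ x : Fin n → ℝ, C.mulVec x + v - x = D.mulVec x + v := by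
    intro x
    rw [hDC, Matrix.sub_mulVec, Matrix.one_mulVec]
    abel
  have hfix : ∀ x : Fin n → ℝ, (f (torusPi n x) = torusPi n x ↔ D.mulVec x + v ∈ intLattice n) := by
    intro x
    rw [hfapp]
    show QuotientAddGroup.mk _ = QuotientAddGroup.mk _ ↔ _
    rw [QuotientAddGroup.eq_iff_sub_mem, hsub]
  -- the bijection with the cokernel of `A`
  set N' : AddSubgroup (Fin n → ℤ) := (LinearMap.range A.mulVecLin).toAddSubgroup with hN'
  set h : (Fin n → ℤ) →+ Torus n :=
    (torusPi n).comp ((Matrix.mulVecLin D⁻¹).toAddMonoidHom.comp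
      (castHomL n).toAddMonoidHom) with hh
  have happ : ∀ m : Fin n → ℤ, h m = torusPi n (D⁻¹.mulVec (castHomL n m)) := fun m => rfl
  have h0 : ∀ m ∈ N', h m = 0 := by
    intro m hm
    obtain ⟨k, hk⟩ := hm
    rw [happ, ← hk]
    show QuotientAddGroup.mk _ = QuotientAddGroup.mk 0
    rw [QuotientAddGroup.eq_iff_sub_mem, sub_zero]
    have : D⁻¹.mulVec (castHomL n (A.mulVec k)) = castHomL n k := by
      rw [← hcastD]
      have := congrArg (fun w => D⁻¹.mulVec w) (rfl : D.mulVec (castHomL n k) = D.mulVec (castHomL n k))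
      rw [Matrix.mulVec_mulVec, Matrix.nonsing_inv_mul _ hDu, Matrix.one_mulVec]
    show D⁻¹.mulVec (castHomL n (A.mulVecLin k)) ∈ intLattice n
    rw [show A.mulVecLin k = A.mulVec k from rfl, this]
    exact mem_intLattice.mpr ⟨k, rfl⟩
  set hbar : (Fin n → ℤ) ⧸ N' →+ Torus n := QuotientAddGroup.lift N' h (fun m hm => (AddMonoidHom.mem_ker).mpr (h0 m hm)) with hhbar
  set c : Torus n := torusPi n (D⁻¹.mulVec (-v)) with hc
  set ψ : (Fin n → ℤ) ⧸ N' → Torus n := fun q => hbar q + c with hψ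
  have hψmk : ∀ m : Fin n → ℤ,
      ψ (QuotientAddGroup.mk m) = torusPi n (D⁻¹.mulVec (castHomL n m - v)) := by
    intro m
    show hbar (QuotientAddGroup.mk m) + c = _
    rw [hhbar, QuotientAddGroup.lift_mk', happ, hc]
    rw [← map_add]
    congr 1
    rw [← Matrix.mulVec_add, ← sub_eq_add_neg]
  -- membership of `ψ q` in the fixed-point set
  have hψfix : ∀ q, f (ψ q) = ψ q := by
    intro q
    induction q using QuotientAddGroup.induction_on with
    | H m =>
      rw [hψmk]
      rw [hfix]
      rw [hDDinv]
      have : castHomL n m - v + v = castHomL n m := by abel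
      rw [this]
      exact mem_intLattice.mpr ⟨m, rfl⟩
  -- surjectivity onto the fixed-point set
  have hψsurj : ∀ p : Torus n, f p = p → ∃ q, ψ q = p := by
    intro p hp
    obtain ⟨x, rfl⟩ := QuotientAddGroup.mk'_surjective (intLattice n) p
    obtain ⟨m, hm⟩ := mem_intLattice.mp ((hfix x).mp hp)
    refine ⟨QuotientAddGroup.mk m, ?_⟩
    rw [hψmk, hm]
    congr 1
    have : D.mulVec x + v - v = D.mulVec x := by abel
    rw [this, Matrix.mulVec_mulVec, Matrix.nonsing_inv_mul _ hDu, Matrix.one_mulVec]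
  -- injectivity
  have hψinj : Function.Injective ψ := by
    intro q1 q2 hq
    have h12 : hbar q1 = hbar q2 := by
      have := hq
      simp only [hψ] at this
      exact add_right_cancel this
    induction q1 using QuotientAddGroup.induction_on with
    | H m1 =>
    induction q2 using QuotientAddGroup.induction_on with
    | H m2 =>
    rw [QuotientAddGroup.eq_iff_sub_mem]
    have hsub0 : h (m1 - m2) = 0 := by
      rw [map_sub]
      have e1 : hbar (QuotientAddGroup.mk m1) = h m1 := rfl
      have e2 : hbar (QuotientAddGroup.mk m2) = h m2 := rfl
      rw [← e1, ← e2, h12, sub_self]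
    rw [happ] at hsub0
    have : D⁻¹.mulVec (castHomL n (m1 - m2)) ∈ intLattice n := by
      have := (QuotientAddGroup.eq_iff_sub_mem).mp hsub0
      simpa using this
    obtain ⟨k, hk⟩ := mem_intLattice.mp this
    refine ⟨k, ?_⟩
    apply castHomL_injective n
    show castHomL n (A.mulVec k) = castHomL n (m1 - m2)
    rw [← hcastD, hk, hDDinv]
  -- package everything
  have hSS : {p : Torus n | f p = p} = Set.range ψ := by
    ext p
    constructor
    · intro hp
      obtain ⟨q, hq⟩ := hψsurj p hp
      exact ⟨q, hq⟩
    · rintro ⟨q, rfl⟩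
      exact hψfix q
  have hidx : N'.index = A.det.natAbs := index_range_mulVecLin A hB
  have hfin : Finite ((Fin n → ℤ) ⧸ N') := by
    have : Nat.card ((Fin n → ℤ) ⧸ N') ≠ 0 := by
      rw [show Nat.card ((Fin n → ℤ) ⧸ N') = N'.index from rfl, hidx]
      simpa using hB
    exact (Nat.card_ne_zero.mp this).2
  refine ⟨f, hfapp, ?_, ?_, ?_⟩
  · rw [hSS]
    exact Set.finite_range ψ
  · rw [hSS]
    exact Set.range_nonempty ψ
  · rw [hSS, ← Nat.card_coe_set_eq]
    have : Nat.card (Set.range ψ) = Nat.card ((Fin n → ℤ) ⧸ N') :=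
      Nat.card_congr (Equiv.ofInjective ψ hψinj).symm
    rw [this, show Nat.card ((Fin n → ℤ) ⧸ N') = N'.index from rfl, hidx]
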